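/- Let (E, F) be a monopoly-free set system with n elements, c a cost vector, S the cheapest feasible set, S* the set minimizing c(S)·2^{|S|−1}, and for each e ∈ S let T_e ∈ F be any feasible set with e ∉ T_e. Then 2^{n−|S*|} · Σ_{e∈S*} min_{T∈F: e∉T} c(T) ≤ |S*| · 2^{n−|S*|} · max_{e∈S} c(T'_e) ≤ 2^n · max_{e∈S} c(T'_e), where T'_e achieves min_{T∈F: e∉T} c(T). Consequently the frugality ratio of MP is at most 2^n. -/

import Mathlib

/-- Chain of inequalities bounding the MP payment by `2^n · max_{e∈S} c(T'_e)`. -/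
theorem mp_frugality_chain {α : Type*} [Fintype α] [DecidableEq α]
    (F : Finset (Finset α)) (c : α → ℝ) (hc : ∀ e, 0 ≤ c e)
    (S Sstar : Finset α) (hS : S ∈ F) (hSstar : Sstar ∈ F)
    (hSne : S.Nonempty) (hSstarne : Sstar.Nonempty)
    (hcheap : ∀ T ∈ F, ∑ a ∈ S, c a ≤ ∑ a ∈ T, c a)
    (hmin : ∀ T ∈ F,
      (∑ a ∈ Sstar, c a) * (2 : ℝ) ^ ((Sstar.card : ℤ) - 1) ≤
        (∑ a ∈ T, c a) * (2 : ℝ) ^ ((T.card : ℤ) - 1))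
    (hne : ∀ e, (F.filter (fun T => e ∉ T)).Nonempty)
    (T' : α → Finset α)
    (hT' : ∀ e ∈ S, T' e ∈ F ∧ e ∉ T' e ∧
      (∑ a ∈ T' e, c a) =
        (F.filter (fun T => e ∉ T)).inf' (hne e) (fun T => ∑ a ∈ T, c a)) :
    (2 : ℝ) ^ ((Fintype.card α : ℤ) - (Sstar.card : ℤ)) *
        ∑ e ∈ Sstar, (F.filter (fun T => e ∉ T)).inf' (hne e) (fun T => ∑ a ∈ T, c a) ≤
      (Sstar.card : ℝ) * (2 : ℝ) ^ ((Fintype.card α : ℤ) - (Sstar.card : ℤ)) *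
        (S.sup' hSne fun e => ∑ a ∈ T' e, c a) ∧
    (Sstar.card : ℝ) * (2 : ℝ) ^ ((Fintype.card α : ℤ) - (Sstar.card : ℤ)) *
        (S.sup' hSne fun e => ∑ a ∈ T' e, c a) ≤
      (2 : ℝ) ^ (Fintype.card α : ℤ) * (S.sup' hSne fun e => ∑ a ∈ T' e, c a) := by
  obtain ⟨e₀, he₀⟩ := id hSne
  set M := S.sup' hSne fun e => ∑ a ∈ T' e, c a with hMdef
  have hsup_ge : ∀ e' ∈ S, (∑ a ∈ T' e', c a) ≤ M := fun e' h => Finset.le_sup' (fun e => ∑ a ∈ T' e, c a) h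
  have hM0 : 0 ≤ M :=
    le_trans (Finset.sum_nonneg fun a _ => hc a) (hsup_ge e₀ he₀)
  have hcS_le : ∑ a ∈ S, c a ≤ M :=
    le_trans (hcheap _ (hT' e₀ he₀).1) (hsup_ge e₀ he₀)
  have key : ∀ e, (F.filter (fun T => e ∉ T)).inf' (hne e) (fun T => ∑ a ∈ T, c a) ≤ M := by
    intro e
    by_cases he : e ∈ S
    · obtain ⟨h1, h2, h3⟩ := hT' e he
      exact h3 ▸ hsup_ge e he
    · have hmem : S ∈ F.filter (fun T => e ∉ T) := Finset.mem_filter.2 ⟨hS, he⟩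
      exact le_trans (Finset.inf'_le _ hmem) hcS_le
  have hp : (0:ℝ) < (2:ℝ) ^ ((Fintype.card α : ℤ) - (Sstar.card : ℤ)) := by positivity
  constructor
  · have h1 : (∑ e ∈ Sstar, (F.filter (fun T => e ∉ T)).inf' (hne e) (fun T => ∑ a ∈ T, c a))
        ≤ (Sstar.card : ℝ) * M := by
      calc ∑ e ∈ Sstar, (F.filter (fun T => e ∉ T)).inf' (hne e) (fun T => ∑ a ∈ T, c a)
          ≤ ∑ _e ∈ Sstar, M := Finset.sum_le_sum fun e _ => key e
        _ = (Sstar.card : ℝ) * M := by rw [Finset.sum_const, nsmul_eq_mul]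
    have := mul_le_mul_of_nonneg_left h1 hp.le
    linarith [this]
  · have hk : (Sstar.card : ℝ) ≤ (2:ℝ) ^ ((Sstar.card : ℤ)) := by
      rw [zpow_natCast]
      exact_mod_cast (@Nat.lt_two_pow_self Sstar.card).le
    have hmul : (Sstar.card : ℝ) * (2:ℝ) ^ ((Fintype.card α : ℤ) - (Sstar.card : ℤ))
        ≤ (2:ℝ) ^ ((Fintype.card α : ℤ)) := by
      calc (Sstar.card : ℝ) * (2:ℝ) ^ ((Fintype.card α : ℤ) - (Sstar.card : ℤ))
          ≤ (2:ℝ) ^ ((Sstar.card : ℤ)) * (2:ℝ) ^ ((Fintype.card α : ℤ) - (Sstar.card : ℤ)) :=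
            mul_le_mul_of_nonneg_right hk hp.le
        _ = (2:ℝ) ^ ((Fintype.card α : ℤ)) := by
            rw [← zpow_add₀ (by norm_num : (2:ℝ) ≠ 0)]; ring_nf
    exact mul_le_mul_of_nonneg_right hmul hM0
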